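/- Let f : {z ∈ ℂ : Re z ≥ 0} → ℂ be continuous and bounded, and holomorphic on {z : Re z > 0}. Suppose there exist a₊, a₋ ∈ ℂ such that f(it) → a₊ as t → +∞ and f(it) → a₋ as t → −∞. Then a₊ = a₋, and f(z) → a₊ as |z| → ∞ with Re z ≥ 0. -/

import Mathlib

open Complex Filter

open Set


set_option maxHeartbeats 1000000 in
lemma lindelof_key (h : ℂ → ℂ) (M : ℝ) (hM0 : 0 < M)
    (hd : DiffContOnCl ℂ h {z : ℂ | 0 < z.re})
    (hM : ∀ z : ℂ, 0 ≤ z.re → ‖(h z)‖ ≤ M)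
    (htend : ∀ ε : ℝ, 0 < ε → ∃ T : ℝ, 0 < T ∧ ∀ t : ℝ, T ≤ |t| →
      ‖(h ((t : ℂ) * Complex.I))‖ ≤ ε)
    {ε : ℝ} (hε : 0 < ε) :
    ∃ R : ℝ, ∀ z : ℂ, 0 ≤ z.re → R ≤ ‖z‖ → ‖(h z)‖ < ε := by
  -- use ε' = ε/6
  set ε' : ℝ := ε / 6 with hε'def
  have hε' : 0 < ε' := by positivity
  obtain ⟨T, hT0, hT⟩ := htend ε' hε'
  -- s = T * sqrt (M / ε')
  set s : ℝ := T * Real.sqrt (M / ε') with hsdef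
  have hs0 : 0 < s := by positivity
  set g : ℂ → ℂ := fun z => h z * ((z ^ 2 + (T : ℂ) ^ 2) / (z + s) ^ 2) with hgdef
  have hzs : ∀ z : ℂ, 0 ≤ z.re → z + s ≠ 0 := by
    intro z hz hzero
    have : (z + (s : ℂ)).re = z.re + s := by simp
    rw [hzero] at this
    simp at this
    nlinarith
  have hq_le : ∀ z : ℂ, 0 ≤ z.re →
      ‖((z ^ 2 + (T : ℂ) ^ 2) / (z + s) ^ 2)‖ ≤ 1 + T ^ 2 / s ^ 2 := by
    intro z hz
    have habs : ‖z‖ ^ 2 ≤ ‖(z + s)‖ ^ 2 := by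
      have := Complex.sq_norm (z + s)
      have h2 : Complex.normSq (z + s) = Complex.normSq z + 2 * s * z.re + s ^ 2 := by
        simp [Complex.normSq_apply]; ring
      nlinarith [Complex.sq_norm z, Complex.sq_norm (z + s), Complex.normSq_nonneg z]
    have hzs' : ‖(z + s)‖ ≠ 0 := by
      exact norm_ne_zero_iff.mpr (hzs z hz)
    have hs_le : s ≤ ‖(z + s)‖ := by
      have : (s : ℝ) ≤ (z + s).re := by simp; linarith
      calc s ≤ (z + s).re := this
        _ ≤ |(z + s).re| := le_abs_self _
        _ ≤ ‖(z + s)‖ := Complex.abs_re_le_norm _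
    rw [norm_div, norm_pow]
    rw [div_le_iff₀ (by positivity)]
    calc ‖(z ^ 2 + (T : ℂ) ^ 2)‖ ≤ ‖(z ^ 2)‖ + ‖((T:ℂ)^2)‖ := by
          exact norm_add_le _ _
      _ = ‖z‖ ^ 2 + T ^ 2 := by simp [norm_pow, Complex.norm_real, abs_of_pos hT0,
            _root_.sq_abs]
      _ ≤ ‖(z + s)‖ ^ 2 + (T ^ 2 / s ^ 2) * ‖(z + s)‖ ^ 2 := by
          have : T ^ 2 ≤ (T ^ 2 / s ^ 2) * ‖(z + s)‖ ^ 2 := by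
            rw [div_mul_eq_mul_div, le_div_iff₀ (by positivity)]
            nlinarith [pow_le_pow_left₀ hs0.le hs_le 2, sq_nonneg T]
          linarith
      _ = (1 + T ^ 2 / s ^ 2) * ‖(z + s)‖ ^ 2 := by ring
  -- differentiability of g
  have hcl : closure {z : ℂ | 0 < z.re} = {z : ℂ | 0 ≤ z.re} := Complex.closure_setOf_lt_re 0
  have hqd : DiffContOnCl ℂ (fun z : ℂ => (z ^ 2 + (T : ℂ) ^ 2) / (z + s) ^ 2)
      {z : ℂ | 0 < z.re} := by
    constructor
    · apply DifferentiableOn.div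
      · exact (differentiable_pow 2).differentiableOn.add_const _
      · exact DifferentiableOn.pow ((differentiable_id.add_const _).differentiableOn) 2
      · intro z hz
        exact pow_ne_zero 2 (hzs z (le_of_lt hz))
    · rw [hcl]
      apply ContinuousOn.div
      · exact ((continuous_pow 2).add continuous_const).continuousOn
      · exact ((continuous_id.add continuous_const).pow 2).continuousOn
      · intro z hz
        exact pow_ne_zero 2 (hzs z hz)
  have hgd : DiffContOnCl ℂ g {z : ℂ | 0 < z.re} :=
    ⟨hd.differentiableOn.mul hqd.differentiableOn, hd.continuousOn.mul hqd.continuousOn⟩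
  -- bound for g on the whole half-plane
  set C0 : ℝ := M * (1 + T ^ 2 / s ^ 2) with hC0def
  have hgC0 : ∀ z : ℂ, 0 ≤ z.re → ‖(g z)‖ ≤ C0 := by
    intro z hz
    rw [hgdef]
    simp only [norm_mul]
    exact mul_le_mul (hM z hz) (hq_le z hz) (norm_nonneg _) hM0.le
  -- bound for g on the imaginary axis
  have hs_sq : s ^ 2 = T ^ 2 * (M / ε') := by
    rw [hsdef, mul_pow, Real.sq_sqrt (by positivity)]
  have him : ∀ t : ℝ, ‖(g ((t : ℂ) * I))‖ ≤ ε' := by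
    intro t
    have hden : ‖((t : ℂ) * I + s)‖ ^ 2 = t ^ 2 + s ^ 2 := by
      have hre : ((t : ℂ) * I + s).re = s := by simp
      have him' : ((t : ℂ) * I + s).im = t := by simp
      rw [Complex.sq_norm, Complex.normSq_apply, hre, him']
      ring
    have hnum : ‖(((t : ℂ) * I) ^ 2 + (T : ℂ) ^ 2)‖ = |T ^ 2 - t ^ 2| := by
      have he : ((t : ℂ) * I) ^ 2 + (T : ℂ) ^ 2 = ((T ^ 2 - t ^ 2 : ℝ) : ℂ) := by
        have hI : ((t : ℂ) * I) ^ 2 = -((t : ℂ) ^ 2) := by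
          rw [mul_pow, I_sq]; ring
        rw [hI]
        push_cast [sub_eq_add_neg]
        try ring
      rw [he, Complex.norm_real, Real.norm_eq_abs]
    have habsg : ‖(g ((t : ℂ) * I))‖ =
        ‖(h ((t : ℂ) * I))‖ * (|T ^ 2 - t ^ 2| / (t ^ 2 + s ^ 2)) := by
      rw [hgdef]
      simp only [norm_mul, norm_div, norm_pow]
      rw [← hnum, ← hden]
    rw [habsg]
    rcases le_or_gt T |t| with hcase | hcase
    · have h1 : ‖(h ((t : ℂ) * I))‖ ≤ ε' := hT t hcase
      have h2 : |T ^ 2 - t ^ 2| / (t ^ 2 + s ^ 2) ≤ 1 := by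
        rw [div_le_one (by positivity)]
        have hT2 : T ^ 2 ≤ t ^ 2 := by
          nlinarith [_root_.sq_abs t, abs_nonneg t]
        rw [abs_sub_comm, _root_.abs_of_nonneg (by linarith : (0:ℝ) ≤ t ^ 2 - T ^ 2)]
        nlinarith
      calc ‖(h ((t : ℂ) * I))‖ * (|T ^ 2 - t ^ 2| / (t ^ 2 + s ^ 2))
          ≤ ε' * 1 := mul_le_mul h1 h2 (by positivity) hε'.le
        _ = ε' := mul_one _
    · have h1 : ‖(h ((t : ℂ) * I))‖ ≤ M := by
        apply hM
        simp
      have h2 : |T ^ 2 - t ^ 2| / (t ^ 2 + s ^ 2) ≤ ε' / M := by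
        have hT2 : t ^ 2 ≤ T ^ 2 := by
          nlinarith [_root_.sq_abs t, abs_nonneg t]
        rw [_root_.abs_of_nonneg (by linarith : (0:ℝ) ≤ T ^ 2 - t ^ 2)]
        rw [div_le_div_iff₀ (by positivity) hM0]
        have hsM : ε' * s ^ 2 = T ^ 2 * M := by
          rw [hs_sq]
          field_simp
        nlinarith [hsM, mul_nonneg hε'.le (sq_nonneg t), mul_nonneg hM0.le (sq_nonneg t)]
      calc ‖(h ((t : ℂ) * I))‖ * (|T ^ 2 - t ^ 2| / (t ^ 2 + s ^ 2))
          ≤ M * (ε' / M) := mul_le_mul h1 h2 (by positivity) hM0.le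
        _ = ε' := by field_simp
  -- Phragmen-Lindelof
  have hPL : ∀ z : ℂ, 0 ≤ z.re → ‖(g z)‖ ≤ ε' := by
    intro z hz
    have := PhragmenLindelof.right_half_plane_of_bounded_on_real (f := g) (C := ε') hgd
      ?_ ?_ ?_ hz
    · simpa using this
    · refine ⟨1, one_lt_two, 0, ?_⟩
      rw [Asymptotics.isBigO_iff]
      refine ⟨C0, ?_⟩
      filter_upwards [mem_inf_of_right (mem_principal_self _)] with w hw
      simp only [zero_mul, Real.exp_zero, norm_one, mul_one]
      exact hgC0 w (le_of_lt hw)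
    · refine ⟨C0, ?_⟩
      rw [Filter.eventually_map]
      filter_upwards [Filter.eventually_ge_atTop (0 : ℝ)] with x hx
      simpa using hgC0 x (by simpa using hx)
    · intro t
      simpa using him t
  -- conclusion
  refine ⟨2 * T + s + 1, fun z hz hR => ?_⟩
  have hzabs : 0 < ‖z‖ := by
    have : (0:ℝ) < 2 * T + s + 1 := by positivity
    linarith
  have hTz : 2 * T ≤ ‖z‖ := by linarith
  have hsz : s ≤ ‖z‖ := by linarith
  have hnum_lb : 3 / 4 * ‖z‖ ^ 2 ≤ ‖(z ^ 2 + (T : ℂ) ^ 2)‖ := by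
    have h1 : ‖(z ^ 2)‖ ≤ ‖(z ^ 2 + (T : ℂ) ^ 2)‖ + ‖((T : ℂ) ^ 2)‖ := by
      calc ‖(z ^ 2)‖ = ‖((z ^ 2 + (T : ℂ) ^ 2) + (-(T : ℂ) ^ 2))‖ := by
            congr 1; ring
        _ ≤ ‖(z ^ 2 + (T : ℂ) ^ 2)‖ + ‖(-(T : ℂ) ^ 2)‖ :=
            norm_add_le _ _
        _ = ‖(z ^ 2 + (T : ℂ) ^ 2)‖ + ‖((T : ℂ) ^ 2)‖ := by
            rw [norm_neg]
    have h2 : ‖((T : ℂ) ^ 2)‖ = T ^ 2 := by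
      rw [norm_pow]
      simp [abs_of_pos hT0]
    rw [norm_pow] at h1
    nlinarith
  have hden_ub : ‖(z + s)‖ ^ 2 ≤ 4 * ‖z‖ ^ 2 := by
    have h1 : ‖(z + s)‖ ≤ ‖z‖ + s := by
      calc ‖(z + s)‖ ≤ ‖z‖ + ‖(s : ℂ)‖ := norm_add_le _ _
        _ = ‖z‖ + s := by simp [_root_.abs_of_pos hs0]
    have h2 : ‖(z + s)‖ ^ 2 ≤ (‖z‖ + s) ^ 2 :=
      pow_le_pow_left₀ (norm_nonneg _) h1 2
    nlinarith [hsz]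
  have heq : ‖(h z)‖ * ‖(z ^ 2 + (T : ℂ) ^ 2)‖ =
      ‖(g z)‖ * ‖(z + s)‖ ^ 2 := by
    have hthis : g z * (z + s) ^ 2 = h z * (z ^ 2 + (T : ℂ) ^ 2) := by
      rw [hgdef]
      simp only
      rw [mul_assoc, div_mul_cancel₀ _ (pow_ne_zero 2 (hzs z hz))]
    calc ‖(h z)‖ * ‖(z ^ 2 + (T : ℂ) ^ 2)‖
        = ‖(h z * (z ^ 2 + (T : ℂ) ^ 2))‖ := (norm_mul _ _).symm
      _ = ‖(g z * (z + s) ^ 2)‖ := by rw [hthis]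
      _ = ‖(g z)‖ * ‖(z + s)‖ ^ 2 := by rw [norm_mul, norm_pow]
  have hg_le : ‖(g z)‖ ≤ ε' := hPL z hz
  have hfinal : ‖(h z)‖ * (3 / 4 * ‖z‖ ^ 2) ≤ ε' * (4 * ‖z‖ ^ 2) := by
    calc ‖(h z)‖ * (3 / 4 * ‖z‖ ^ 2)
        ≤ ‖(h z)‖ * ‖(z ^ 2 + (T : ℂ) ^ 2)‖ :=
          mul_le_mul_of_nonneg_left hnum_lb (norm_nonneg _)
      _ = ‖(g z)‖ * ‖(z + s)‖ ^ 2 := heq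
      _ ≤ ε' * (4 * ‖z‖ ^ 2) := mul_le_mul hg_le hden_ub (by positivity) hε'.le
  have hX : 0 < ‖z‖ ^ 2 := by positivity
  have h9 : ‖(h z)‖ ≤ 16 / 3 * ε' := by
    nlinarith [hfinal, hX]
  rw [hε'def] at h9
  linarith

/-- Lindelöf's lemma: a bounded continuous function on the closed right half-plane,
holomorphic in the open half-plane, with limits `a₊` and `a₋` along the positive and
negative imaginary axis, satisfies `a₊ = a₋` and tends to this limit as `|z| → ∞`
in the closed half-plane. -/
theorem stmt14 (f : ℂ → ℂ) (aPlus aMinus : ℂ)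
    (hc : ContinuousOn f {z : ℂ | 0 ≤ z.re})
    (hb : ∃ C : ℝ, ∀ z : ℂ, 0 ≤ z.re → ‖(f z)‖ ≤ C)
    (hd : DifferentiableOn ℂ f {z : ℂ | 0 < z.re})
    (hp : Filter.Tendsto (fun t : ℝ => f ((t : ℂ) * Complex.I)) Filter.atTop (nhds aPlus))
    (hm : Filter.Tendsto (fun t : ℝ => f ((t : ℂ) * Complex.I)) Filter.atBot (nhds aMinus)) :
    aPlus = aMinus ∧ ∀ ε : ℝ, 0 < ε → ∃ R : ℝ, ∀ z : ℂ, 0 ≤ z.re → R ≤ ‖z‖ →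
      ‖(f z - aPlus)‖ < ε := by
  obtain ⟨C, hC⟩ := hb
  set B : ℝ := 2 * max C 0 + ‖aPlus‖ + ‖aMinus‖ + 1 with hBdef
  have hB0 : 0 < B := by positivity
  have hfB : ∀ a : ℂ, ‖a‖ ≤ max C 0 + ‖aPlus‖ + ‖aMinus‖ →
      ∀ z : ℂ, 0 ≤ z.re → ‖(f z - a)‖ ≤ B := by
    intro a ha z hz
    calc ‖(f z - a)‖ ≤ ‖(f z)‖ + ‖a‖ := by
          simpa [sub_eq_add_neg] using norm_add_le (f z) (-a)
      _ ≤ max C 0 + (max C 0 + ‖aPlus‖ + ‖aMinus‖) := by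
          have := hC z hz
          have h1 : ‖(f z)‖ ≤ max C 0 := le_trans this (le_max_left _ _)
          linarith
      _ ≤ B := by
          rw [hBdef]
          have : (0:ℝ) ≤ max C 0 := le_max_right _ _
          have := norm_nonneg aPlus
          have := norm_nonneg aMinus
          linarith
  set h : ℂ → ℂ := fun z => (f z - aPlus) * (f z - aMinus) with hhdef
  have hcl : closure {z : ℂ | 0 < z.re} = {z : ℂ | 0 ≤ z.re} := Complex.closure_setOf_lt_re 0
  have hdh : DiffContOnCl ℂ h {z : ℂ | 0 < z.re} := by
    constructor
    · exact (hd.sub (differentiableOn_const _)).mul (hd.sub (differentiableOn_const _))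
    · rw [hcl]
      exact (hc.sub continuousOn_const).mul (hc.sub continuousOn_const)
  have hMh : ∀ z : ℂ, 0 ≤ z.re → ‖(h z)‖ ≤ B * B := by
    intro z hz
    rw [hhdef]
    simp only [norm_mul]
    have h1 := hfB aPlus (by nlinarith [norm_nonneg aMinus, le_max_right C 0]) z hz
    have h2 := hfB aMinus (by nlinarith [norm_nonneg aPlus, le_max_right C 0]) z hz
    exact mul_le_mul h1 h2 (norm_nonneg _) hB0.le
  have htop : Tendsto (fun t : ℝ => h ((t : ℂ) * I)) atTop (nhds 0) := by
    have := (hp.sub (tendsto_const_nhds (x := aPlus))).mul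
      (hp.sub (tendsto_const_nhds (x := aMinus)))
    simpa using this
  have hbot : Tendsto (fun t : ℝ => h ((t : ℂ) * I)) atBot (nhds 0) := by
    have := (hm.sub (tendsto_const_nhds (x := aPlus))).mul
      (hm.sub (tendsto_const_nhds (x := aMinus)))
    simpa using this
  have htend : ∀ ε : ℝ, 0 < ε → ∃ T : ℝ, 0 < T ∧ ∀ t : ℝ, T ≤ |t| →
      ‖(h ((t : ℂ) * I))‖ ≤ ε := by
    intro ε hε
    have h1 := Metric.tendsto_nhds.mp htop ε hε
    have h2 := Metric.tendsto_nhds.mp hbot ε hε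
    rw [eventually_atTop] at h1
    rw [eventually_atBot] at h2
    obtain ⟨T₁, hT₁⟩ := h1
    obtain ⟨T₂, hT₂⟩ := h2
    refine ⟨max 1 (max T₁ (-T₂)), by positivity, fun t ht => ?_⟩
    rcases le_abs.mp ht with hcase | hcase
    · have : T₁ ≤ t := le_trans (le_trans (le_max_left _ _) (le_max_right _ _)) hcase
      have := hT₁ t this
      rw [Complex.dist_eq, sub_zero] at this
      exact this.le
    · have : t ≤ T₂ := by
        have hT : -T₂ ≤ max 1 (max T₁ (-T₂)) :=
          le_trans (le_max_right _ _) (le_max_right _ _)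
        linarith
      have := hT₂ t this
      rw [Complex.dist_eq, sub_zero] at this
      exact this.le
  have key : ∀ ε : ℝ, 0 < ε → ∃ R : ℝ, ∀ z : ℂ, 0 ≤ z.re → R ≤ ‖z‖ →
      ‖(h z)‖ < ε :=
    fun ε hε => lindelof_key h (B * B) (mul_pos hB0 hB0) hdh hMh htend hε
  -- first, aPlus = aMinus
  have heqa : aPlus = aMinus := by
    by_contra hne
    set d : ℝ := ‖(aPlus - aMinus)‖ with hddef
    have hd0 : 0 < d := by
      rw [hddef]
      exact norm_pos_iff.mpr (sub_ne_zero.mpr hne)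
    obtain ⟨R₀, hR₀⟩ := key ((d / 2) ^ 2) (by positivity)
    have h1 := Metric.tendsto_nhds.mp hp (d / 2) (by positivity)
    have h2 := Metric.tendsto_nhds.mp hm (d / 2) (by positivity)
    rw [eventually_atTop] at h1
    rw [eventually_atBot] at h2
    obtain ⟨T₁, hT₁⟩ := h1
    obtain ⟨T₂, hT₂⟩ := h2
    set R : ℝ := max 1 (max R₀ (max T₁ (-T₂))) with hRdef
    have hR1 : (1:ℝ) ≤ R := le_max_left _ _
    have hRR₀ : R₀ ≤ R := le_trans (le_max_left _ _) (le_max_right _ _)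
    have hRT₁ : T₁ ≤ R := le_trans (le_trans (le_max_left _ _) (le_max_right _ _))
      (le_max_right _ _)
    have hRT₂ : -T₂ ≤ R := le_trans (le_trans (le_max_right _ _) (le_max_right _ _))
      (le_max_right _ _)
    have hR0 : 0 < R := lt_of_lt_of_le one_pos hR1
    set φ : ℝ → ℂ := fun θ => (R : ℂ) * Complex.exp ((θ : ℂ) * I) with hφdef
    have hφre : ∀ θ ∈ Icc (-(Real.pi / 2)) (Real.pi / 2), 0 ≤ (φ θ).re := by
      intro θ hθ
      rw [hφdef]
      simp only
      rw [Complex.re_ofReal_mul, Complex.exp_ofReal_mul_I_re]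
      exact mul_nonneg hR0.le (Real.cos_nonneg_of_mem_Icc hθ)
    have hφabs : ∀ θ : ℝ, ‖(φ θ)‖ = R := by
      intro θ
      rw [hφdef]
      simp only [norm_mul, Complex.norm_exp_ofReal_mul_I, mul_one, Complex.norm_real]
      exact abs_of_pos hR0
    have hφcont : Continuous φ := by
      apply continuous_const.mul
      exact (Complex.continuous_ofReal.mul continuous_const).cexp
    have hKcont : ContinuousOn (f ∘ φ) (Icc (-(Real.pi / 2)) (Real.pi / 2)) :=
      hc.comp hφcont.continuousOn (fun θ hθ => hφre θ hθ)
    have hK : IsPreconnected ((f ∘ φ) '' Icc (-(Real.pi / 2)) (Real.pi / 2)) :=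
      (isPreconnected_Icc).image _ hKcont
    have hmem : ∀ θ ∈ Icc (-(Real.pi / 2)) (Real.pi / 2),
        f (φ θ) ∈ Metric.ball aPlus (d / 2) ∪ Metric.ball aMinus (d / 2) := by
      intro θ hθ
      have hfar := hR₀ (φ θ) (hφre θ hθ) (by rw [hφabs]; exact hRR₀)
      rw [hhdef] at hfar
      simp only [norm_mul] at hfar
      by_contra hcon
      simp only [Set.mem_union, Metric.mem_ball, Complex.dist_eq, not_or, not_lt] at hcon
      obtain ⟨hc1, hc2⟩ := hcon
      have : (d / 2) ^ 2 ≤ ‖(f (φ θ) - aPlus)‖ * ‖(f (φ θ) - aMinus)‖ := by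
        calc (d / 2) ^ 2 = (d / 2) * (d / 2) := sq (d / 2)
          _ ≤ _ := mul_le_mul hc1 hc2 (by positivity) (norm_nonneg _)
      linarith
    have hexpI : Complex.exp ((↑(Real.pi / 2) : ℂ) * I) = I := by
      rw [Complex.exp_mul_I, ← Complex.ofReal_cos, ← Complex.ofReal_sin,
        Real.cos_pi_div_two, Real.sin_pi_div_two]
      simp
    have hexpnegI : Complex.exp ((↑(-(Real.pi / 2)) : ℂ) * I) = -I := by
      rw [Complex.exp_mul_I, ← Complex.ofReal_cos, ← Complex.ofReal_sin,
        Real.cos_neg, Real.sin_neg, Real.cos_pi_div_two, Real.sin_pi_div_two]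
      simp
    have hπ : -(Real.pi / 2) ≤ Real.pi / 2 := by
      have := Real.pi_pos
      linarith
    have hmem1 : ((f ∘ φ) '' Icc (-(Real.pi / 2)) (Real.pi / 2) ∩ Metric.ball aPlus (d / 2)).Nonempty := by
      refine ⟨f (φ (Real.pi / 2)), ⟨Real.pi / 2, ⟨hπ, le_refl _⟩, rfl⟩, ?_⟩
      have hφval : φ (Real.pi / 2) = (R : ℂ) * I := by rw [hφdef]; simp only; rw [hexpI]
      rw [Metric.mem_ball, hφval]
      exact hT₁ R hRT₁
    have hmem2 : ((f ∘ φ) '' Icc (-(Real.pi / 2)) (Real.pi / 2) ∩ Metric.ball aMinus (d / 2)).Nonempty := by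
      refine ⟨f (φ (-(Real.pi / 2))), ⟨-(Real.pi / 2), ⟨le_refl _, hπ⟩, rfl⟩, ?_⟩
      have hφval : φ (-(Real.pi / 2)) = ((-R : ℝ) : ℂ) * I := by
        rw [hφdef]
        simp only
        rw [hexpnegI]
        push_cast
        ring
      rw [Metric.mem_ball, hφval]
      exact hT₂ (-R) (by linarith)
    obtain ⟨w, _, hw1, hw2⟩ := hK (Metric.ball aPlus (d / 2)) (Metric.ball aMinus (d / 2))
      Metric.isOpen_ball Metric.isOpen_ball
      (by rintro w ⟨θ, hθ, rfl⟩; exact hmem θ hθ) hmem1 hmem2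
    rw [Metric.mem_ball, Complex.dist_eq] at hw1 hw2
    have : d ≤ ‖(aPlus - w)‖ + ‖(w - aMinus)‖ := by
      calc d = ‖((aPlus - w) + (w - aMinus))‖ := by rw [hddef]; congr 1; ring
        _ ≤ _ := norm_add_le _ _
    rw [norm_sub_rev aPlus w] at this
    linarith
  refine ⟨heqa, fun ε hε => ?_⟩
  obtain ⟨R, hR⟩ := key (ε ^ 2) (by positivity)
  refine ⟨R, fun z hz hzR => ?_⟩
  have := hR z hz hzR
  rw [hhdef, ← heqa] at this
  simp only [norm_mul] at this
  have hsq : ‖(f z - aPlus)‖ ^ 2 < ε ^ 2 := by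
    rw [sq]
    exact this
  exact lt_of_pow_lt_pow_left₀ 2 hε.le hsq
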